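/- For all integers m, n ≥ 10, every Roman dominating function f on the cylinder P_m □ C_n satisfies 5·(weight of f) ≥ 2mn + 2n; equivalently, the minimum loss ℒ(m,n) = (5/2)·γ_R(P_m □ C_n) − mn satisfies ℒ(m,n) ≥ n. -/

import Mathlib

open SimpleGraph

/-- A Roman dominating function on `G`: every vertex with value `0` has a neighbor
with value `2`. -/
def IsRomanDominating {V : Type*} (G : SimpleGraph V) (f : V → Fin 3) : Prop :=
  ∀ v, f v = 0 → ∃ w, G.Adj v w ∧ f w = 2

/-- The Roman domination number of a finite graph: the minimum weight
`∑ v, f v` of a Roman dominating function on `G`. -/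
noncomputable def romanDominationNumber {V : Type*} [Fintype V] (G : SimpleGraph V) : ℕ :=
  sInf {k | ∃ f : V → Fin 3, IsRomanDominating G f ∧ ∑ v, (f v : ℕ) = k}

namespace RomanAux

inductive V3 | z | o | t
deriving DecidableEq

instance : Fintype V3 := ⟨⟨{V3.z, V3.o, V3.t}, by decide⟩, by intro x; cases x <;> decide⟩

abbrev Col := V3 × V3 × V3 × V3
abbrev Pat := Bool × Bool × Bool × Bool

def i2 : V3 → ℤ | V3.t => 1 | _ => 0
def i1 : V3 → ℤ | V3.o => 1 | _ => 0
def valN : V3 → ℤ | V3.z => 0 | V3.o => 1 | V3.t => 2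
def b2 : V3 → Bool | V3.t => true | _ => false
def tw : Col → Pat | (x0, x1, x2, x3) => (b2 x0, b2 x1, b2 x2, b2 x3)
def pi2 (b : Bool) : ℤ := if b then 1 else 0

lemma i2_nonneg (x : V3) : 0 ≤ i2 x := by cases x <;> decide
lemma i1_nonneg (x : V3) : 0 ≤ i1 x := by cases x <;> decide
lemma pib2 (x : V3) : pi2 (b2 x) = i2 x := by cases x <;> rfl
lemma valN_eq (x : V3) : valN x = i1 x + 2 * i2 x := by cases x <;> rfl

def q : Pat → Pat → ℤ
  | (false, false, false, false), (false, false, false, false) => 4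
  | (false, false, false, false), (false, false, false, true) => 4
  | (false, false, false, false), (false, false, true, false) => 4
  | (false, false, false, false), (false, false, true, true) => 4
  | (false, false, false, false), (false, true, false, false) => 3
  | (false, false, false, false), (false, true, false, true) => 3
  | (false, false, false, false), (false, true, true, false) => 3
  | (false, false, false, false), (false, true, true, true) => 3
  | (false, false, false, false), (true, false, false, false) => 3
  | (false, false, false, false), (true, false, false, true) => 3
  | (false, false, false, false), (true, false, true, false) => 1
  | (false, false, false, false), (true, false, true, true) => 1
  | (false, false, false, false), (true, true, false, false) => 0
  | (false, false, false, false), (true, true, false, true) => 0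
  | (false, false, false, false), (true, true, true, false) => 2
  | (false, false, false, false), (true, true, true, true) => 2
  | (false, false, false, true), (false, false, false, false) => 4
  | (false, false, false, true), (false, true, false, false) => 3
  | (false, false, false, true), (true, false, false, false) => 1
  | (false, false, false, true), (true, false, false, true) => 3
  | (false, false, false, true), (true, false, true, false) => 3
  | (false, false, false, true), (true, true, false, false) => 3
  | (false, false, true, false), (false, false, false, false) => 1
  | (false, false, true, false), (false, false, false, true) => 3
  | (false, false, true, false), (false, false, true, false) => 3
  | (false, false, true, false), (false, true, false, false) => 3
  | (false, false, true, false), (true, false, false, false) => 3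
  | (false, true, false, false), (false, false, false, false) => 2
  | (false, true, false, false), (false, false, false, true) => 2
  | (false, true, false, false), (false, false, true, false) => 4
  | (false, true, false, false), (false, false, true, true) => 4
  | (false, true, false, false), (false, true, false, false) => 4
  | (false, true, false, false), (false, true, false, true) => 4
  | (false, true, false, false), (true, false, false, false) => 4
  | (false, true, false, false), (true, false, false, true) => 4
  | (false, true, false, true), (false, false, false, false) => 4
  | (true, false, false, false), (false, false, false, false) => 4
  | (true, false, false, false), (false, false, false, true) => 4
  | (true, false, false, false), (false, false, true, false) => 2
  | (true, false, false, false), (false, false, true, true) => 4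
  | (true, false, false, false), (false, true, true, false) => 4
  | (true, false, false, false), (true, false, true, false) => 4
  | (true, false, false, true), (false, false, false, false) => 4
  | (true, false, true, false), (false, false, false, false) => 4
  | _, _ => 5

def wd0 (A : Pat) (b : Col) (C : Pat) : ℤ := i2 b.1 + i2 b.2.1 + pi2 A.1 + pi2 C.1
def wd1 (A : Pat) (b : Col) (C : Pat) : ℤ := i2 b.2.1 + i2 b.1 + i2 b.2.2.1 + pi2 A.2.1 + pi2 C.2.1
def wd2 (A : Pat) (b : Col) (C : Pat) : ℤ :=
  i2 b.2.2.1 + i2 b.2.1 + i2 b.2.2.2 + pi2 A.2.2.1 + pi2 C.2.2.1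
def wd3 (A : Pat) (b : Col) (C : Pat) : ℤ := i2 b.2.2.2 + i2 b.2.2.1 + pi2 A.2.2.2 + pi2 C.2.2.2

def tS (A : Pat) (b : Col) (C : Pat) : ℤ :=
  2 * i2 b.1 + 3 * (i1 b.1 + i1 b.2.1 + i1 b.2.2.1 + i1 b.2.2.2)
  + 2 * (wd0 A b C + i1 b.1 - 1) + 2 * (wd1 A b C + i1 b.2.1 - 1)
  + 2 * (wd2 A b C + i1 b.2.2.1 - 1)
  + max 0 (2 * (wd3 A b C + i1 b.2.2.2 - 1))

def ValidW (A : Pat) (b : Col) (C : Pat) : Prop :=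
  (b.1 = V3.z → 1 ≤ wd0 A b C) ∧ (b.2.1 = V3.z → 1 ≤ wd1 A b C) ∧
  (b.2.2.1 = V3.z → 1 ≤ wd2 A b C)

instance (A : Pat) (b : Col) (C : Pat) : Decidable (ValidW A b C) :=
  inferInstanceAs (Decidable (_ ∧ _ ∧ _))

set_option maxRecDepth 100000 in
set_option maxHeartbeats 4000000 in
theorem core : ∀ (A : Pat) (b : Col) (C : Pat), ValidW A b C →
    1 + q (tw b) C - q A (tw b) ≤ tS A b C := by decide

def T3 (a b c : Col) : ℤ := tS (tw a) b (tw c)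
def P2 (a b : Col) : ℤ := q (tw a) (tw b)

lemma strip {n : ℕ} [NeZero n] (g : Fin n → Col)
    (hv : ∀ j : Fin n, ValidW (tw (g (j - 1))) (g j) (tw (g (j + 1)))) :
    (n : ℤ) ≤ ∑ j : Fin n, T3 (g (j - 1)) (g j) (g (j + 1)) := by
  have key : ∀ j : Fin n,
      1 + P2 (g j) (g (j + 1)) - P2 (g (j - 1)) (g j) ≤ T3 (g (j - 1)) (g j) (g (j + 1)) :=
    fun j => core _ _ _ (hv j)
  have tele : ∑ j : Fin n, P2 (g (j - 1)) (g j) = ∑ j : Fin n, P2 (g j) (g (j + 1)) := by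
    have := Equiv.sum_comp (Equiv.addRight (1 : Fin n))
      (fun j : Fin n => P2 (g (j - 1)) (g j))
    rw [← this]
    refine Finset.sum_congr rfl fun j _ => ?_
    simp [add_sub_cancel_right]
  calc (n : ℤ) = ∑ j : Fin n,
        ((1 : ℤ) + P2 (g j) (g (j + 1)) - P2 (g (j - 1)) (g j)) := by
        rw [Finset.sum_sub_distrib, Finset.sum_add_distrib, ← tele]
        simp [Finset.card_univ]
    _ ≤ _ := Finset.sum_le_sum fun j _ => key j

end RomanAux

namespace RomanAux

variable {m n : ℕ}

def Fc (f : Fin m × Fin n → Fin 3) (i : ℕ) (j : Fin n) : V3 :=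
  if h : i < m then (if f (⟨i, h⟩, j) = 0 then V3.z else if f (⟨i, h⟩, j) = 1 then V3.o else V3.t)
  else V3.z

section WithGroup
variable [NeZero n]

def c2 (f : Fin m × Fin n → Fin 3) (i : ℕ) (j : Fin n) : ℤ := i2 (Fc f i j)
def c1 (f : Fin m × Fin n → Fin 3) (i : ℕ) (j : Fin n) : ℤ := i1 (Fc f i j)
def up (f : Fin m × Fin n → Fin 3) (i : ℕ) (j : Fin n) : ℤ :=
  if i = 0 then 0 else c2 f (i - 1) j
def dd (f : Fin m × Fin n → Fin 3) (i : ℕ) (j : Fin n) : ℤ :=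
  c2 f i j + c2 f (i + 1) j + up f i j + c2 f i (j - 1) + c2 f i (j + 1)
def ee (f : Fin m × Fin n → Fin 3) (i : ℕ) (j : Fin n) : ℤ :=
  2 * (dd f i j + c1 f i j - 1)

lemma up_nonneg (f : Fin m × Fin n → Fin 3) (i : ℕ) (j : Fin n) : 0 ≤ up f i j := by
  unfold up; split
  · exact le_refl 0
  · exact i2_nonneg _


lemma Fc_in (f : Fin m × Fin n → Fin 3) (i : Fin m) (j : Fin n) :
    Fc f (i : ℕ) j = (if f (i, j) = 0 then V3.z else if f (i, j) = 1 then V3.o else V3.t) := by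
  unfold Fc
  rw [dif_pos i.isLt]

lemma Fc_two {f : Fin m × Fin n → Fin 3} {i : Fin m} {j : Fin n} (h : f (i, j) = 2) :
    i2 (Fc f (i : ℕ) j) = 1 := by
  rw [Fc_in, h]
  rfl

lemma H1 (hn2 : 2 ≤ n) (f : Fin m × Fin n → Fin 3)
    (hf : IsRomanDominating ((pathGraph m).boxProd (cycleGraph n)) f) :
    ∀ i, i < m → ∀ j, Fc f i j = V3.z → 1 ≤ dd f i j := by
  intro i hi j hz
  have hfv : f (⟨i, hi⟩, j) = 0 := by
    have h2 := hz
    unfold Fc at h2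
    rw [dif_pos hi] at h2
    by_contra hne
    rcases hne' : f (⟨i, hi⟩, j) with ⟨k, hk⟩
    rw [hne'] at h2
    interval_cases k <;> simp_all <;> exact hne hne'
  obtain ⟨w, hadj, hw2⟩ := hf _ hfv
  have hwt : i2 (Fc f (w.1 : ℕ) w.2) = 1 := by
    have : f (w.1, w.2) = 2 := by rwa [Prod.mk.eta]
    exact Fc_two this
  have n1 : (0:ℤ) ≤ c2 f i j := i2_nonneg _
  have n2 : (0:ℤ) ≤ c2 f (i + 1) j := i2_nonneg _
  have n3 := up_nonneg f i j
  have n4 : (0:ℤ) ≤ c2 f i (j - 1) := i2_nonneg _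
  have n5 : (0:ℤ) ≤ c2 f i (j + 1) := i2_nonneg _
  rw [SimpleGraph.boxProd_adj] at hadj
  rcases hadj with ⟨hp, he⟩ | ⟨hc, he⟩
  · rw [pathGraph_adj] at hp
    simp only at hp he
    rcases hp with h1 | h2
    · have h1' : i + 1 = (w.1 : ℕ) := h1
      have hc2 : c2 f (i + 1) j = 1 := by
        unfold c2
        rw [he, show i + 1 = (w.1 : ℕ) from h1']
        exact hwt
      unfold dd; linarith
    · have h2' : (w.1 : ℕ) + 1 = i := h2
      have hi0 : i ≠ 0 := by omega
      have hup : up f i j = 1 := by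
        unfold up
        rw [if_neg hi0]
        unfold c2
        rw [he, show i - 1 = (w.1 : ℕ) by omega]
        exact hwt
      unfold dd; linarith
  · rw [cycleGraph_adj'] at hc
    simp only at hc he
    have hone : ((1 : Fin n) : ℕ) = 1 := by rw [Fin.val_one']; exact Nat.mod_eq_of_lt (by omega)
    have hwi : i2 (Fc f i w.2) = 1 := by
      have : (w.1 : ℕ) = i := by rw [← he]
      rwa [this] at hwt
    rcases hc with h1 | h2
    · have hsub : j - w.2 = 1 := Fin.ext (by rw [hone]; exact h1)
      have hw : w.2 = j - 1 := by
        have h' : j = 1 + w.2 := sub_eq_iff_eq_add.mp hsub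
        rw [h', add_sub_cancel_left]
      have hc2 : c2 f i (j - 1) = 1 := by unfold c2; rw [← hw]; exact hwi
      unfold dd; linarith
    · have hsub : w.2 - j = 1 := Fin.ext (by rw [hone]; exact h2)
      have hw : w.2 = j + 1 := by
        have h' : w.2 = 1 + j := sub_eq_iff_eq_add.mp hsub
        rw [h', add_comm]
      have hc2 : c2 f i (j + 1) = 1 := by unfold c2; rw [← hw]; exact hwi
      unfold dd; linarith

lemma ee_nonneg (hn2 : 2 ≤ n) (f : Fin m × Fin n → Fin 3)
    (hf : IsRomanDominating ((pathGraph m).boxProd (cycleGraph n)) f) :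
    ∀ i, i < m → ∀ j, 0 ≤ ee f i j := by
  intro i hi j
  have n1 : (0:ℤ) ≤ c2 f i j := i2_nonneg _
  have n2 : (0:ℤ) ≤ c2 f (i + 1) j := i2_nonneg _
  have n3 := up_nonneg f i j
  have n4 : (0:ℤ) ≤ c2 f i (j - 1) := i2_nonneg _
  have n5 : (0:ℤ) ≤ c2 f i (j + 1) := i2_nonneg _
  unfold ee
  rcases hF : Fc f i j with _ | _ | _
  · have := H1 hn2 f hf i hi j hF
    have hc1 : c1 f i j = 0 := by unfold c1; rw [hF]; rfl
    linarith
  · have hc1 : c1 f i j = 1 := by unfold c1; rw [hF]; rfl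
    have hdd : 0 ≤ dd f i j := by unfold dd; linarith
    linarith
  · have hc2 : c2 f i j = 1 := by unfold c2; rw [hF]; rfl
    have hc1 : c1 f i j = 0 := by unfold c1; rw [hF]; rfl
    have hdd : 1 ≤ dd f i j := by unfold dd; linarith
    linarith


def R2 (f : Fin m × Fin n → Fin 3) (i : ℕ) : ℤ := ∑ j, c2 f i j
def RC (f : Fin m × Fin n → Fin 3) (i : ℕ) : ℤ := ∑ j, c1 f i j
def RE (f : Fin m × Fin n → Fin 3) (i : ℕ) : ℤ := ∑ j, ee f i j
def RW (f : Fin m × Fin n → Fin 3) (i : ℕ) : ℤ := ∑ j, valN (Fc f i j)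

lemma up_ne (f : Fin m × Fin n → Fin 3) {i : ℕ} (h : i ≠ 0) (j : Fin n) :
    up f i j = c2 f (i - 1) j := if_neg h

lemma c2_oob (f : Fin m × Fin n → Fin 3) {i : ℕ} (h : m ≤ i) (j : Fin n) : c2 f i j = 0 := by
  unfold c2 Fc
  rw [dif_neg (by omega)]
  rfl

lemma R2_oob (f : Fin m × Fin n → Fin 3) {i : ℕ} (h : m ≤ i) : R2 f i = 0 := by
  unfold R2
  rw [Finset.sum_congr rfl fun j _ => c2_oob f h j]
  simp

lemma sum_shift_add (h : Fin n → ℤ) : ∑ j, h (j + 1) = ∑ j, h j := by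
  simpa using Equiv.sum_comp (Equiv.addRight (1 : Fin n)) h

lemma sum_shift_sub (h : Fin n → ℤ) : ∑ j, h (j - 1) = ∑ j, h j := by
  simpa using Equiv.sum_comp (Equiv.subRight (1 : Fin n)) h

lemma RD_val (f : Fin m × Fin n → Fin 3) (i : ℕ) :
    ∑ j, dd f i j = 3 * R2 f i + R2 f (i + 1) + (if i = 0 then 0 else R2 f (i - 1)) := by
  unfold dd
  rw [Finset.sum_add_distrib, Finset.sum_add_distrib, Finset.sum_add_distrib,
    Finset.sum_add_distrib]
  rw [sum_shift_add (fun j => c2 f i j), sum_shift_sub (fun j => c2 f i j)]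
  have hup : ∑ j, up f i j = (if i = 0 then 0 else R2 f (i - 1)) := by
    by_cases h : i = 0
    · simp [up, h]
    · rw [if_neg h]
      rw [Finset.sum_congr rfl fun j _ => up_ne f h j]
      rfl
  rw [hup]
  unfold R2
  ring

lemma RE_val (f : Fin m × Fin n → Fin 3) (i : ℕ) :
    RE f i = 2 * (∑ j, dd f i j) + 2 * RC f i - 2 * n := by
  unfold RE ee
  rw [Finset.sum_congr rfl fun j _ => by
    show 2 * (dd f i j + c1 f i j - 1) = (2 * dd f i j + 2 * c1 f i j) - 2; ring]
  rw [Finset.sum_sub_distrib, Finset.sum_add_distrib]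
  simp [Finset.mul_sum, RC, Finset.card_univ, mul_comm]

lemma RW_val (f : Fin m × Fin n → Fin 3) (i : ℕ) : RW f i = RC f i + 2 * R2 f i := by
  unfold RW
  rw [Finset.sum_congr rfl fun j _ => valN_eq (Fc f i j)]
  rw [Finset.sum_add_distrib]
  unfold RC R2
  rw [Finset.mul_sum]
  rfl

lemma RE_nonneg (hn2 : 2 ≤ n) (f : Fin m × Fin n → Fin 3)
    (hf : IsRomanDominating ((pathGraph m).boxProd (cycleGraph n)) f)
    {i : ℕ} (hi : i < m) : 0 ≤ RE f i :=
  Finset.sum_nonneg fun j _ => ee_nonneg hn2 f hf i hi j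

lemma RC_nonneg (f : Fin m × Fin n → Fin 3) (i : ℕ) : 0 ≤ RC f i :=
  Finset.sum_nonneg fun j _ => i1_nonneg _

def g4 (f : Fin m × Fin n → Fin 3) (i0 i1 i2 i3 : ℕ) (j : Fin n) : Col :=
  (Fc f i0 j, Fc f i1 j, Fc f i2 j, Fc f i3 j)

def s3 (f : Fin m × Fin n → Fin 3) (i ilo : ℕ) (j : Fin n) : ℤ :=
  max 0 (2 * (i2 (Fc f i j) + i2 (Fc f ilo j) + i2 (Fc f i (j - 1)) + i2 (Fc f i (j + 1))
    + i1 (Fc f i j) - 1))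

lemma hval : ∀ x : Fin 3,
    valN (if x = 0 then V3.z else if x = 1 then V3.o else V3.t) = ((x : ℕ) : ℤ) := by decide

end WithGroup
end RomanAux

open RomanAux

/-- for `m, n ≥ 10`, every Roman dominating function `f` on `P_m □ C_n`
satisfies `5 · weight(f) ≥ 2mn + 2n` (equivalently, the minimum loss
`ℒ(m,n) = (5/2)·γ_R(P_m □ C_n) − mn` satisfies `ℒ(m,n) ≥ n`). -/
theorem five_mul_weight_ge_of_isRomanDominating (m n : ℕ) (hm : 10 ≤ m) (hn : 10 ≤ n)
    (f : Fin m × Fin n → Fin 3)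
    (hf : IsRomanDominating ((pathGraph m).boxProd (cycleGraph n)) f) :
    5 * ∑ v, (f v : ℕ) ≥ 2 * m * n + 2 * n := by
  haveI : NeZero n := ⟨by omega⟩
  have hn2 : 2 ≤ n := by omega
  obtain ⟨M, rfl⟩ : ∃ M, m = M + 10 := ⟨m - 10, by omega⟩
  -- weight conversion
  have hW : ((∑ v, (f v : ℕ) : ℕ) : ℤ) = ∑ i ∈ Finset.range (M + 10), RW f i := by
    push_cast
    rw [Fintype.sum_prod_type]
    rw [← Fin.sum_univ_eq_sum_range (fun i => RW f i) (M + 10)]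
    refine Finset.sum_congr rfl fun i _ => ?_
    unfold RW
    refine Finset.sum_congr rfl fun j _ => ?_
    rw [Fc_in]
    exact (hval (f (i, j))).symm
  -- vertical sum identities
  have hSD : ∑ i ∈ Finset.range (M + 10), (∑ j, dd f i j)
      = 5 * (∑ i ∈ Finset.range (M + 10), R2 f i) - R2 f 0 - R2 f (M + 9) := by
    rw [Finset.sum_congr rfl fun i _ => RD_val f i]
    rw [Finset.sum_add_distrib, Finset.sum_add_distrib, ← Finset.mul_sum]
    have h1 : ∑ i ∈ Finset.range (M + 10), R2 f (i + 1)
        = ∑ i ∈ Finset.range (M + 10), R2 f i - R2 f 0 := by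
      have h1a := Finset.sum_range_succ' (fun i => R2 f i) (M + 10)
      have h1b := Finset.sum_range_succ (fun i => R2 f i) (M + 10)
      have h0 : R2 f (M + 10) = 0 := R2_oob f (le_refl _)
      linarith
    have h2 : ∑ i ∈ Finset.range (M + 10), (if i = 0 then (0 : ℤ) else R2 f (i - 1))
        = ∑ i ∈ Finset.range (M + 10), R2 f i - R2 f (M + 9) := by
      have h2a := Finset.sum_range_succ'
        (fun i => if i = 0 then (0 : ℤ) else R2 f (i - 1)) (M + 9)
      have h2b := Finset.sum_range_succ (fun i => R2 f i) (M + 9)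
      simp only [Nat.succ_ne_zero, if_false, Nat.add_sub_cancel, if_pos,
        show M + 9 + 1 = M + 10 from by omega] at h2a h2b
      linarith
    rw [h1, h2]
    ring
  have hREsum : ∑ i ∈ Finset.range (M + 10), RE f i
      = 2 * (∑ i ∈ Finset.range (M + 10), (∑ j, dd f i j))
        + 2 * (∑ i ∈ Finset.range (M + 10), RC f i) - 2 * (((M : ℤ) + 10) * n) := by
    rw [Finset.sum_congr rfl fun i _ => RE_val f i]
    rw [Finset.sum_sub_distrib, Finset.sum_add_distrib, ← Finset.mul_sum, ← Finset.mul_sum,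
      Finset.sum_const, Finset.card_range, nsmul_eq_mul]
    push_cast
    ring
  have hRWsum : ∑ i ∈ Finset.range (M + 10), RW f i
      = ∑ i ∈ Finset.range (M + 10), RC f i + 2 * ∑ i ∈ Finset.range (M + 10), R2 f i := by
    rw [Finset.sum_congr rfl fun i _ => RW_val f i]
    rw [Finset.sum_add_distrib, ← Finset.mul_sum]
  -- top strip
  have ewd0t : ∀ j : Fin n, wd0 (tw (g4 f 0 1 2 3 (j - 1))) (g4 f 0 1 2 3 j)
      (tw (g4 f 0 1 2 3 (j + 1))) = dd f 0 j := by
    intro j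
    show i2 (Fc f 0 j) + i2 (Fc f 1 j) + pi2 (b2 (Fc f 0 (j - 1))) + pi2 (b2 (Fc f 0 (j + 1)))
      = dd f 0 j
    rw [pib2, pib2]
    unfold dd up c2
    norm_num
    try ring
  have ewd1t : ∀ j : Fin n, wd1 (tw (g4 f 0 1 2 3 (j - 1))) (g4 f 0 1 2 3 j)
      (tw (g4 f 0 1 2 3 (j + 1))) = dd f 1 j := by
    intro j
    show i2 (Fc f 1 j) + i2 (Fc f 0 j) + i2 (Fc f 2 j) + pi2 (b2 (Fc f 1 (j - 1)))
      + pi2 (b2 (Fc f 1 (j + 1))) = dd f 1 j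
    rw [pib2, pib2]
    unfold dd up c2
    norm_num
    try ring
  have ewd2t : ∀ j : Fin n, wd2 (tw (g4 f 0 1 2 3 (j - 1))) (g4 f 0 1 2 3 j)
      (tw (g4 f 0 1 2 3 (j + 1))) = dd f 2 j := by
    intro j
    show i2 (Fc f 2 j) + i2 (Fc f 1 j) + i2 (Fc f 3 j) + pi2 (b2 (Fc f 2 (j - 1)))
      + pi2 (b2 (Fc f 2 (j + 1))) = dd f 2 j
    rw [pib2, pib2]
    unfold dd up c2
    norm_num
    try ring
  have hvt : ∀ j : Fin n, ValidW (tw (g4 f 0 1 2 3 (j - 1))) (g4 f 0 1 2 3 j)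
      (tw (g4 f 0 1 2 3 (j + 1))) := by
    intro j
    refine ⟨fun hz => ?_, fun hz => ?_, fun hz => ?_⟩
    · rw [ewd0t j]; exact H1 hn2 f hf 0 (by omega) j hz
    · rw [ewd1t j]; exact H1 hn2 f hf 1 (by omega) j hz
    · rw [ewd2t j]; exact H1 hn2 f hf 2 (by omega) j hz
  have htopS : (n : ℤ) ≤ ∑ j : Fin n,
      T3 (g4 f 0 1 2 3 (j - 1)) (g4 f 0 1 2 3 j) (g4 f 0 1 2 3 (j + 1)) := strip _ hvt
  have httj : ∀ j : Fin n, T3 (g4 f 0 1 2 3 (j - 1)) (g4 f 0 1 2 3 j) (g4 f 0 1 2 3 (j + 1))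
      = 2 * c2 f 0 j + 3 * c1 f 0 j + 3 * c1 f 1 j + 3 * c1 f 2 j + 3 * c1 f 3 j
        + ee f 0 j + ee f 1 j + ee f 2 j + s3 f 3 2 j := by
    intro j
    unfold T3 tS
    rw [ewd0t j, ewd1t j, ewd2t j]
    have hmx : max (0 : ℤ) (2 * (wd3 (tw (g4 f 0 1 2 3 (j - 1))) (g4 f 0 1 2 3 j)
        (tw (g4 f 0 1 2 3 (j + 1))) + i1 (g4 f 0 1 2 3 j).2.2.2 - 1)) = s3 f 3 2 j := by
      refine congrArg (max 0) ?_
      show 2 * (i2 (Fc f 3 j) + i2 (Fc f 2 j) + pi2 (b2 (Fc f 3 (j - 1)))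
        + pi2 (b2 (Fc f 3 (j + 1))) + i1 (Fc f 3 j) - 1) = _
      rw [pib2, pib2]
    rw [hmx]
    show 2 * i2 (Fc f 0 j)
        + 3 * (i1 (Fc f 0 j) + i1 (Fc f 1 j) + i1 (Fc f 2 j) + i1 (Fc f 3 j))
        + 2 * (dd f 0 j + i1 (Fc f 0 j) - 1) + 2 * (dd f 1 j + i1 (Fc f 1 j) - 1)
        + 2 * (dd f 2 j + i1 (Fc f 2 j) - 1) + s3 f 3 2 j = _
    unfold ee c1 c2
    ring
  have htopsum : ∑ j : Fin n,
      T3 (g4 f 0 1 2 3 (j - 1)) (g4 f 0 1 2 3 j) (g4 f 0 1 2 3 (j + 1))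
      = 2 * R2 f 0 + 3 * RC f 0 + 3 * RC f 1 + 3 * RC f 2 + 3 * RC f 3
        + RE f 0 + RE f 1 + RE f 2 + ∑ j : Fin n, s3 f 3 2 j := by
    rw [Finset.sum_congr rfl fun j _ => httj j]
    simp only [Finset.sum_add_distrib, ← Finset.mul_sum]
    rfl
  have hs3top : ∀ j : Fin n, s3 f 3 2 j ≤ ee f 3 j := by
    intro j
    have h0 : 0 ≤ ee f 3 j := ee_nonneg hn2 f hf 3 (by omega) j
    refine max_le h0 ?_
    have h4 : (0 : ℤ) ≤ c2 f (3 + 1) j := i2_nonneg _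
    unfold ee dd up c2 c1 at *
    norm_num at *
    linarith

  -- bottom strip
  have ewd0b : ∀ j : Fin n, wd0 (tw (g4 f (M + 9) (M + 8) (M + 7) (M + 6) (j - 1)))
      (g4 f (M + 9) (M + 8) (M + 7) (M + 6) j)
      (tw (g4 f (M + 9) (M + 8) (M + 7) (M + 6) (j + 1))) = dd f (M + 9) j := by
    intro j
    show i2 (Fc f (M + 9) j) + i2 (Fc f (M + 8) j) + pi2 (b2 (Fc f (M + 9) (j - 1)))
      + pi2 (b2 (Fc f (M + 9) (j + 1))) = dd f (M + 9) j
    rw [pib2, pib2]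
    unfold dd
    rw [up_ne f (by omega)]
    rw [show M + 9 - 1 = M + 8 from by omega]
    rw [show c2 f (M + 9 + 1) j = (0:ℤ) from
      (congrArg (fun i : ℕ => c2 f i j) (show M + 9 + 1 = M + 10 from by omega)).trans
        (c2_oob f (le_refl _) j)]
    unfold c2
    ring
  have ewd1b : ∀ j : Fin n, wd1 (tw (g4 f (M + 9) (M + 8) (M + 7) (M + 6) (j - 1)))
      (g4 f (M + 9) (M + 8) (M + 7) (M + 6) j)
      (tw (g4 f (M + 9) (M + 8) (M + 7) (M + 6) (j + 1))) = dd f (M + 8) j := by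
    intro j
    show i2 (Fc f (M + 8) j) + i2 (Fc f (M + 9) j) + i2 (Fc f (M + 7) j)
      + pi2 (b2 (Fc f (M + 8) (j - 1))) + pi2 (b2 (Fc f (M + 8) (j + 1))) = dd f (M + 8) j
    rw [pib2, pib2]
    unfold dd
    rw [up_ne f (by omega), show M + 8 - 1 = M + 7 from by omega,
      show M + 8 + 1 = M + 9 from by omega]
    unfold c2
    ring
  have ewd2b : ∀ j : Fin n, wd2 (tw (g4 f (M + 9) (M + 8) (M + 7) (M + 6) (j - 1)))
      (g4 f (M + 9) (M + 8) (M + 7) (M + 6) j)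
      (tw (g4 f (M + 9) (M + 8) (M + 7) (M + 6) (j + 1))) = dd f (M + 7) j := by
    intro j
    show i2 (Fc f (M + 7) j) + i2 (Fc f (M + 8) j) + i2 (Fc f (M + 6) j)
      + pi2 (b2 (Fc f (M + 7) (j - 1))) + pi2 (b2 (Fc f (M + 7) (j + 1))) = dd f (M + 7) j
    rw [pib2, pib2]
    unfold dd
    rw [up_ne f (by omega), show M + 7 - 1 = M + 6 from by omega,
      show M + 7 + 1 = M + 8 from by omega]
    unfold c2
    ring
  have hvb : ∀ j : Fin n, ValidW (tw (g4 f (M + 9) (M + 8) (M + 7) (M + 6) (j - 1)))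
      (g4 f (M + 9) (M + 8) (M + 7) (M + 6) j)
      (tw (g4 f (M + 9) (M + 8) (M + 7) (M + 6) (j + 1))) := by
    intro j
    refine ⟨fun hz => ?_, fun hz => ?_, fun hz => ?_⟩
    · rw [ewd0b j]; exact H1 hn2 f hf (M + 9) (by omega) j hz
    · rw [ewd1b j]; exact H1 hn2 f hf (M + 8) (by omega) j hz
    · rw [ewd2b j]; exact H1 hn2 f hf (M + 7) (by omega) j hz
  have hbotS : (n : ℤ) ≤ ∑ j : Fin n,
      T3 (g4 f (M + 9) (M + 8) (M + 7) (M + 6) (j - 1))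
        (g4 f (M + 9) (M + 8) (M + 7) (M + 6) j)
        (g4 f (M + 9) (M + 8) (M + 7) (M + 6) (j + 1)) := strip _ hvb
  have htbj : ∀ j : Fin n, T3 (g4 f (M + 9) (M + 8) (M + 7) (M + 6) (j - 1))
      (g4 f (M + 9) (M + 8) (M + 7) (M + 6) j)
      (g4 f (M + 9) (M + 8) (M + 7) (M + 6) (j + 1))
      = 2 * c2 f (M + 9) j + 3 * c1 f (M + 9) j + 3 * c1 f (M + 8) j + 3 * c1 f (M + 7) j
        + 3 * c1 f (M + 6) j + ee f (M + 9) j + ee f (M + 8) j + ee f (M + 7) j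
        + s3 f (M + 6) (M + 7) j := by
    intro j
    unfold T3 tS
    rw [ewd0b j, ewd1b j, ewd2b j]
    have hmx : max (0 : ℤ) (2 * (wd3 (tw (g4 f (M + 9) (M + 8) (M + 7) (M + 6) (j - 1)))
        (g4 f (M + 9) (M + 8) (M + 7) (M + 6) j)
        (tw (g4 f (M + 9) (M + 8) (M + 7) (M + 6) (j + 1)))
        + i1 (g4 f (M + 9) (M + 8) (M + 7) (M + 6) j).2.2.2 - 1)) = s3 f (M + 6) (M + 7) j := by
      refine congrArg (max 0) ?_
      show 2 * (i2 (Fc f (M + 6) j) + i2 (Fc f (M + 7) j) + pi2 (b2 (Fc f (M + 6) (j - 1)))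
        + pi2 (b2 (Fc f (M + 6) (j + 1))) + i1 (Fc f (M + 6) j) - 1) = _
      rw [pib2, pib2]
    rw [hmx]
    show 2 * i2 (Fc f (M + 9) j)
        + 3 * (i1 (Fc f (M + 9) j) + i1 (Fc f (M + 8) j) + i1 (Fc f (M + 7) j)
          + i1 (Fc f (M + 6) j))
        + 2 * (dd f (M + 9) j + i1 (Fc f (M + 9) j) - 1)
        + 2 * (dd f (M + 8) j + i1 (Fc f (M + 8) j) - 1)
        + 2 * (dd f (M + 7) j + i1 (Fc f (M + 7) j) - 1) + s3 f (M + 6) (M + 7) j = _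
    unfold ee c1 c2
    ring
  have hbotsum : ∑ j : Fin n,
      T3 (g4 f (M + 9) (M + 8) (M + 7) (M + 6) (j - 1))
        (g4 f (M + 9) (M + 8) (M + 7) (M + 6) j)
        (g4 f (M + 9) (M + 8) (M + 7) (M + 6) (j + 1))
      = 2 * R2 f (M + 9) + 3 * RC f (M + 9) + 3 * RC f (M + 8) + 3 * RC f (M + 7)
        + 3 * RC f (M + 6) + RE f (M + 9) + RE f (M + 8) + RE f (M + 7)
        + ∑ j : Fin n, s3 f (M + 6) (M + 7) j := by
    rw [Finset.sum_congr rfl fun j _ => htbj j]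
    simp only [Finset.sum_add_distrib, ← Finset.mul_sum]
    rfl
  have hs3bot : ∀ j : Fin n, s3 f (M + 6) (M + 7) j ≤ ee f (M + 6) j := by
    intro j
    have h0 : 0 ≤ ee f (M + 6) j := ee_nonneg hn2 f hf (M + 6) (by omega) j
    refine max_le h0 ?_
    have h4 : (0 : ℤ) ≤ i2 (Fc f (M + 5) j) := i2_nonneg _
    unfold ee dd
    rw [up_ne f (by omega), show M + 6 - 1 = M + 5 from by omega,
      show M + 6 + 1 = M + 7 from by omega]
    unfold c2 c1
    linarith
  -- sums over selected rows
  have hs3topsum : ∑ j : Fin n, s3 f 3 2 j ≤ RE f 3 :=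
    Finset.sum_le_sum fun j _ => hs3top j
  have hs3botsum : ∑ j : Fin n, s3 f (M + 6) (M + 7) j ≤ RE f (M + 6) :=
    Finset.sum_le_sum fun j _ => hs3bot j
  have hsubset : ({0, 1, 2, 3, M + 6, M + 7, M + 8, M + 9} : Finset ℕ)
      ⊆ Finset.range (M + 10) := by
    intro x hx
    simp only [Finset.mem_insert, Finset.mem_singleton] at hx
    simp only [Finset.mem_range]
    omega
  have hexp : ∀ h : ℕ → ℤ, ∑ i ∈ ({0, 1, 2, 3, M + 6, M + 7, M + 8, M + 9} : Finset ℕ), h i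
      = h 0 + h 1 + h 2 + h 3 + h (M + 6) + h (M + 7) + h (M + 8) + h (M + 9) := by
    intro h
    rw [Finset.sum_insert (by simp; try omega), Finset.sum_insert (by simp; try omega),
      Finset.sum_insert (by simp; try omega), Finset.sum_insert (by simp; try omega),
      Finset.sum_insert (by simp; try omega), Finset.sum_insert (by simp; try omega),
      Finset.sum_insert (by simp; try omega), Finset.sum_singleton]
    ring
  have hsubE : RE f 0 + RE f 1 + RE f 2 + RE f 3 + RE f (M + 6) + RE f (M + 7) + RE f (M + 8)
      + RE f (M + 9) ≤ ∑ i ∈ Finset.range (M + 10), RE f i := by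
    rw [← hexp (RE f)]
    refine Finset.sum_le_sum_of_subset_of_nonneg hsubset fun i hi _ => ?_
    exact RE_nonneg hn2 f hf (Finset.mem_range.mp hi)
  have hsubC : RC f 0 + RC f 1 + RC f 2 + RC f 3 + RC f (M + 6) + RC f (M + 7) + RC f (M + 8)
      + RC f (M + 9) ≤ ∑ i ∈ Finset.range (M + 10), RC f i := by
    rw [← hexp (RC f)]
    refine Finset.sum_le_sum_of_subset_of_nonneg hsubset fun i hi _ => ?_
    exact RC_nonneg f i
  -- final assembly
  have final : (2 * ((M : ℤ) + 10) * n + 2 * n : ℤ)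
      ≤ 5 * ((∑ v, (f v : ℕ) : ℕ) : ℤ) := by
    rw [hW, hRWsum]
    have hC3 : (0:ℤ) ≤ RC f 1 + RC f 2 := by
      have := RC_nonneg f 1; have := RC_nonneg f 2; linarith
    linarith [htopS, hbotS, htopsum, hbotsum, hs3topsum, hs3botsum, hsubE, hsubC, hSD, hREsum,
      hRWsum, RC_nonneg f 0, RC_nonneg f 1, RC_nonneg f 2, RC_nonneg f 3,
      RC_nonneg f (M + 6), RC_nonneg f (M + 7), RC_nonneg f (M + 8), RC_nonneg f (M + 9)]
  have : 2 * (M + 10) * n + 2 * n ≤ 5 * ∑ v, (f v : ℕ) := by exact_mod_cast final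
  omega
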